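/- arXiv:1411.1047 — 5 statements merged into one kernel-verified Lean document; each statement's English description precedes it below -/
import Mathlib

section
/- Let p be a prime, s ∈ {0,1,...,p-1}, α a natural number, and B ∈ {1,2,...,p-s-1}. Then for all positive integers A and n, the binomial coefficient C(s + p·α, p^A·n - B) is divisible by p^A. -/
theorem binom_congruence_part1 (p : ℕ) (hp : p.Prime) (s : ℕ) (hs : s < p) (α : ℕ)
    (B : ℕ) (hB1 : 1 ≤ B) (hB2 : B ≤ p - s - 1) :
    ∀ A n : ℕ, 1 ≤ A → 1 ≤ n →
      (p ^ A : ℕ) ∣ Nat.choose (s + p * α) (p ^ A * n - B) := by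
  intro A n hA hn
  haveI : Fact p.Prime := ⟨hp⟩
  set m := s + p * α with hm
  set k := p ^ A * n - B with hk
  rcases le_or_gt k m with hkm | hkm
  · -- main case: use Kummer's theorem
    set b := max (A + 1) (Nat.log p m + 1) with hb
    have hlog : Nat.log p m < b := lt_of_lt_of_le (Nat.lt_succ_self _)
      (le_max_right _ _)
    have hBp : B < p := by omega
    have hval := padicValNat_choose (p := p) (n := m) (k := k) (b := b) hkm hlog
    -- each i ∈ [1, A] produces a carry
    have hsub : Finset.Ico 1 (A + 1) ⊆
        (Finset.Ico 1 b).filter fun i => p ^ i ≤ k % p ^ i + (m - k) % p ^ i := by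
      intro i hi
      rw [Finset.mem_Ico] at hi
      rw [Finset.mem_filter, Finset.mem_Ico]
      refine ⟨⟨hi.1, lt_of_lt_of_le hi.2 (le_max_left _ _)⟩, ?_⟩
      set q := p ^ i with hq
      have hpq : p ≤ q := Nat.le_self_pow (by omega) p
      have hdvd : q ∣ p ^ A * n := Dvd.dvd.mul_right (pow_dvd_pow p (by omega)) n
      obtain ⟨t, ht⟩ := hdvd
      have ht1 : 1 ≤ t := by
        have h1 : 1 ≤ q * t := ht ▸ Nat.mul_pos (pow_pos hp.pos A) hn
        by_contra h; push_neg at h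
        interval_cases t <;> omega
      -- k % q = q - B
      have hkq : k % q = q - B := by
        have heq : k = q * (t - 1) + (q - B) := by
          have h2 : q * t = q * (t - 1) + q := by
            cases t with
            | zero => omega
            | succ t' => simp [Nat.mul_succ]
          omega
        rw [heq, Nat.mul_add_mod]
        exact Nat.mod_eq_of_lt (by omega)
      -- m % q ≤ q - p + s
      have hmq : m % q ≤ q - p + s := by
        have h1 : m % q % p = s := by
          rw [Nat.mod_mod_of_dvd _ ⟨p ^ (i - 1), by rw [hq, ← pow_succ']; congr 1; omega⟩]
          rw [hm, Nat.add_mul_mod_self_left, Nat.mod_eq_of_lt hs]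
        have hq0 : 0 < q := pow_pos hp.pos i
        have h2 : m % q < q := Nat.mod_lt _ hq0
        have h3 : m % q = p * (m % q / p) + s := by
          conv_lhs => rw [← Nat.div_add_mod (m % q) p]
          omega
        have h4 : m % q / p < q / p := by
          apply Nat.div_lt_div_of_lt_of_dvd ⟨p ^ (i-1), by rw [hq, ← pow_succ']; congr 1; omega⟩ h2
        have h5 : p * (q / p) = q := by
          rw [Nat.mul_div_cancel' ⟨p ^ (i-1), by rw [hq, ← pow_succ']; congr 1; omega⟩]
        have h6 := Nat.mul_le_mul_left p (Nat.succ_le_of_lt h4)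
        have h7 : p * (m % q / p + 1) = p * (m % q / p) + p := by ring
        rw [Nat.mul_succ] at h6
        omega
      -- carry condition
      by_contra hcon
      push_neg at hcon
      have hmod : (k % q + (m - k) % q) % q = m % q := by
        rw [← Nat.add_mod, Nat.add_comm, Nat.sub_add_cancel hkm]
      rw [Nat.mod_eq_of_lt hcon] at hmod
      omega
    have hcard : A ≤ ((Finset.Ico 1 b).filter
        fun i => p ^ i ≤ k % p ^ i + (m - k) % p ^ i).card := by
      calc A = (Finset.Ico 1 (A + 1)).card := by simp
        _ ≤ _ := Finset.card_le_card hsub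
    have hAle : A ≤ padicValNat p (Nat.choose m k) := by omega
    calc (p ^ A : ℕ) ∣ p ^ padicValNat p (Nat.choose m k) := pow_dvd_pow p hAle
      _ ∣ Nat.choose m k := pow_padicValNat_dvd
  · rw [Nat.choose_eq_zero_of_lt hkm]
    exact dvd_zero _
end

section
/- Let p be a prime, s ∈ {0,1,...,p-1}, α a natural number with α ≢ -1 (mod p), and B ∈ {1,2,...,p-1}. Then for all positive integers A and n, the binomial coefficient C(s + p·α, p^A·n - B) is divisible by p^(A-1). -/
open Nat Finset

/-- key mod computation: for `1 ≤ i ≤ A`, `(p^A * n - B) % p^i + B = p^i`. -/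
lemma kmod (p : ℕ) (hp : 2 ≤ p) (B A n i : ℕ) (hB1 : 1 ≤ B) (hB : B < p)
    (hi : 1 ≤ i) (hiA : i ≤ A) (hn : 1 ≤ n) :
    (p ^ A * n - B) % p ^ i + B = p ^ i := by
  have hppos : 0 < p := by omega
  have hBi : B < p ^ i := by
    calc B < p := hB
    _ = p ^ 1 := (pow_one p).symm
    _ ≤ p ^ i := Nat.pow_le_pow_right hppos hi
  have hq : p ^ A * n = p ^ i * (p ^ (A - i) * n) := by
    rw [← mul_assoc, ← pow_add]
    congr 2
    omega
  set q := p ^ (A - i) * n with hqdef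
  have hq1 : 1 ≤ q := Nat.one_le_iff_ne_zero.2 (by positivity)
  have hsplit : p ^ A * n - B = p ^ i * (q - 1) + (p ^ i - B) := by
    have h1 : p ^ i * (q - 1) = p ^ i * q - p ^ i := by
      rw [Nat.mul_sub, mul_one]
    have h2 : p ^ i ≤ p ^ i * q := Nat.le_mul_of_pos_right _ hq1
    omega
  rw [hsplit, Nat.mul_add_mod, Nat.mod_eq_of_lt (by omega)]
  omega

theorem binom_congruence_part2 (p : ℕ) (hp : p.Prime) (s : ℕ) (hs : s < p) (α : ℕ)
    (hα : (α : ZMod p) ≠ -1)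
    (B : ℕ) (hB1 : 1 ≤ B) (hB2 : B ≤ p - 1) :
    ∀ A n : ℕ, 1 ≤ A → 1 ≤ n →
      (p ^ (A - 1) : ℕ) ∣ Nat.choose (s + p * α) (p ^ A * n - B) := by
  intro A n hA hn
  have hp2 : 2 ≤ p := hp.two_le
  have hBp : B < p := by omega
  set m := s + p * α with hm
  set k := p ^ A * n - B with hk
  rcases lt_or_ge m k with hlt | hkm
  · rw [Nat.choose_eq_zero_of_lt hlt]
    exact dvd_zero _
  -- now k ≤ m; use Kummer
  set b := A + 1 + Nat.log p m with hb
  have hlogb : Nat.log p m < b := by omega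
  have hkummer := Nat.Prime.emultiplicity_choose hp hkm hlogb
  apply pow_dvd_of_le_emultiplicity
  rw [hkummer, Nat.cast_le]
  set r := m - k with hr
  -- carries (additive form)
  have hki : ∀ i, 1 ≤ i → i ≤ A → k % p ^ i + B = p ^ i := fun i h1 h2 =>
    kmod p hp2 B A n i hB1 hBp h1 h2 hn
  have hmkr : m = k + r := by omega
  have hmp : m % p = s := by
    rw [hm, Nat.add_mul_mod_self_left, Nat.mod_eq_of_lt hs]
  have hmp2 : m % p ^ 2 = s + p * (α % p) := by
    rw [hm]
    have h1 : p * α % p ^ 2 = p * (α % p) := by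
      rw [pow_two, Nat.mul_mod_mul_left]
    rw [Nat.add_mod, h1, Nat.mod_eq_of_lt (show s < p ^ 2 by nlinarith)]
    apply Nat.mod_eq_of_lt
    have : α % p < p := Nat.mod_lt _ (by omega)
    nlinarith
  have hAb : A + 1 ≤ b := by omega
  clear_value m k b r
  clear hkummer hk hm hb
  rcases le_or_gt B (r % p) with hcase | hcase
  · -- carry at lowest position: carries at i = 1 .. A-1 (i.e. Ico 1 A)
    calc A - 1 = (Ico 1 A).card := by rw [Nat.card_Ico]
    _ ≤ _ := by
      apply Finset.card_le_card
      intro i hi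
      simp only [Finset.mem_Ico, Finset.mem_filter] at hi ⊢
      obtain ⟨hi1, hiA⟩ := hi
      refine ⟨⟨hi1, by omega⟩, ?_⟩
      have h1 : k % p ^ i + B = p ^ i := hki i hi1 (by omega)
      have h2 : B ≤ r % p ^ i := by
        have hd : p ∣ p ^ i := dvd_pow_self p (by omega)
        have := Nat.mod_mod_of_dvd r hd
        have := Nat.mod_le (r % p ^ i) p
        omega
      omega
  · -- no carry at position 0. Show carry at position 1 using hα, then i = 2 .. A.
    rcases Nat.lt_or_ge A 2 with hA1 | hA2
    · -- A = 1 : trivial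
      have : A = 1 := by omega
      simp [this]
    have hk1 : k % p + B = p := by
      have := hki 1 le_rfl (by omega); simpa using this
    have hk2 : k % p ^ 2 + B = p ^ 2 := hki 2 (by omega) hA2
    have hsq : p ^ 2 = p * p := sq p
    have hr2 : B ≤ r % p ^ 2 := by
      by_contra hcon
      push_neg at hcon
      have hrp : r % p ^ 2 % p = r % p := Nat.mod_mod_of_dvd r (dvd_pow_self p (by omega))
      have hr2p : r % p ^ 2 < p := by omega
      have hreq : r % p ^ 2 = r % p := by
        rw [← hrp, Nat.mod_eq_of_lt hr2p]
      -- m % p from addition (no carry)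
      have e1 : m % p = k % p + r % p := by
        rw [hmkr, Nat.add_mod]
        exact Nat.mod_eq_of_lt (by omega)
      -- m % p^2 from addition (no carry in two digits)
      have e2 : m % p ^ 2 = k % p ^ 2 + r % p ^ 2 := by
        rw [hmkr, Nat.add_mod]
        exact Nat.mod_eq_of_lt (by omega)
      -- deduce α % p = p - 1
      have hαp : α % p + 1 = p := by
        have key : p * (α % p) + p = p * p := by omega
        have key2 : p * (α % p + 1) = p * p := by rw [mul_add, mul_one]; omega
        have := Nat.eq_of_mul_eq_mul_left (show 0 < p by omega) key2
        omega
      apply hα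
      have h0 : ((α % p + 1 : ℕ) : ZMod p) = 0 := by
        rw [hαp]; exact ZMod.natCast_self p
      push_cast at h0
      have hcast : (α : ZMod p) = ((α % p : ℕ) : ZMod p) := (ZMod.natCast_mod α p).symm
      rw [hcast]
      linear_combination h0
    -- carries at i = 2 .. A (Ico 2 (A+1))
    calc A - 1 = (Ico 2 (A + 1)).card := by rw [Nat.card_Ico]; omega
    _ ≤ _ := by
      apply Finset.card_le_card
      intro i hi
      simp only [Finset.mem_Ico, Finset.mem_filter] at hi ⊢
      obtain ⟨hi2, hiA⟩ := hi
      refine ⟨⟨by omega, by omega⟩, ?_⟩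
      have h1 : k % p ^ i + B = p ^ i := hki i (by omega) (by omega)
      have h2 : B ≤ r % p ^ i := by
        have hd : p ^ 2 ∣ p ^ i := pow_dvd_pow p hi2
        have := Nat.mod_mod_of_dvd r hd
        have := Nat.mod_le (r % p ^ i) (p ^ 2)
        omega
      omega
end

section
/- Let m ≥ 1 and 0 ≤ α ≤ m-2 be integers, x = 2m+1, y = α+1, and χ = χ_{8m+4}^{(α)} the periodic function mod 4x equal to ψ_{x-2y} - ψ_{x+2y} - ψ_{3x-2y} + ψ_{3x+2y} (indicator functions of residue classes mod 4x). Then χ is a good function: there exist integers C₁, C₂ coprime to 4x with (x-2y)·C₁ ≡ x+2y (mod 4x) and (3x-2y)·C₂ ≡ 3x+2y (mod 4x). -/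
/-- `χ_{8m+4}^{(α)}` is a good function: there exist multipliers coprime to `4x`
carrying `x - 2y` to `x + 2y` and `3x - 2y` to `3x + 2y` modulo `4x`. -/
theorem chi_is_good (m α : ℕ) (hm : 1 ≤ m) (hα : α + 2 ≤ m)
    (x y : ℤ) (hx : x = 2 * m + 1) (hy : y = α + 1) :
    ∃ C₁ C₂ : ℤ, IsCoprime C₁ (4 * x) ∧ IsCoprime C₂ (4 * x) ∧
      (x - 2 * y) * C₁ ≡ x + 2 * y [ZMOD 4 * x] ∧
      (3 * x - 2 * y) * C₂ ≡ 3 * x + 2 * y [ZMOD 4 * x] := by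
  refine ⟨2 * x - 1, 2 * x - 1, ⟨-(2 * x + 1), x, by ring⟩, ⟨-(2 * x + 1), x, by ring⟩,
    Int.ModEq.symm (Int.modEq_iff_dvd.mpr ⟨(m : ℤ) - α - 1, by subst hx hy; ring⟩),
    Int.ModEq.symm (Int.modEq_iff_dvd.mpr ⟨3 * (m : ℤ) - α - 1, by subst hx hy; ring⟩)⟩
end

section
/- Let p be a prime, A a positive integer, and y an integer. Let s be the residue of y mod p with 0 ≤ s < p, and fix positive integers n and B with B < p, and set k = p^A·n - B and C = the p-adic valuation of k!. If α is any natural number with y ≡ s + p·α (mod p^(A+C)), then C(y, k) ≡ C(s + p·α, k) (mod p^A), where C(y,k) denotes the generalized binomial coefficient y(y-1)···(y-k+1)/k!. -/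
/-- Congruence between generalized binomial coefficients at `p`-adically close arguments. -/
theorem generalized_binom_congruence (p : ℕ) (hp : p.Prime) (A : ℕ) (hA : 1 ≤ A)
    (y : ℤ) (s : ℕ) (hs : (s : ℤ) = y % p)
    (n B : ℕ) (hn : 1 ≤ n) (hB : 1 ≤ B) (hBp : B < p)
    (k : ℕ) (hk : k = p ^ A * n - B)
    (C : ℕ) (hC : C = padicValNat p (Nat.factorial k))
    (α : ℕ) (hα : y ≡ (s : ℤ) + p * α [ZMOD (p : ℤ) ^ (A + C)]) :
    Ring.choose y k ≡ Ring.choose ((s : ℤ) + p * α) k [ZMOD (p : ℤ) ^ A] := by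
  set z : ℤ := (s : ℤ) + p * α with hz
  -- divisibility of difference of descPochhammer evaluations
  have hdvd1 : ((p : ℤ) ^ (A + C)) ∣ (descPochhammer ℤ k).eval z - (descPochhammer ℤ k).eval y :=
    dvd_trans (Int.ModEq.dvd hα) (Polynomial.sub_dvd_eval_sub z y _)
  have heval : ∀ w : ℤ, (descPochhammer ℤ k).eval w = (k.factorial : ℤ) * Ring.choose w k := by
    intro w
    rw [Polynomial.eval_eq_smeval, Ring.descPochhammer_eq_factorial_smul_choose, nsmul_eq_mul]
  rw [heval, heval] at hdvd1
  rw [← mul_sub] at hdvd1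
  -- factor k! = p^C * m with p ∤ m
  have hfac : k.factorial = p ^ C * (k.factorial / p ^ C) := by
    rw [hC, ← Nat.factorization_def _ hp]
    exact (Nat.ordProj_mul_ordCompl_eq_self k.factorial p).symm
  set m : ℕ := k.factorial / p ^ C with hm
  have hpm : ¬ p ∣ m := by
    rw [hm, hC, ← Nat.factorization_def _ hp]
    exact Nat.not_dvd_ordCompl hp (Nat.factorial_ne_zero k)
  have hdvd2 : ((p : ℤ) ^ C * ((p : ℤ) ^ A)) ∣
      (p : ℤ) ^ C * ((m : ℤ) * (Ring.choose z k - Ring.choose y k)) := by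
    have : ((k.factorial : ℤ)) = (p : ℤ) ^ C * m := by exact_mod_cast hfac
    rw [← mul_assoc, ← this, ← pow_add, add_comm C A]
    exact hdvd1
  have hpc : ((p : ℤ) ^ C) ≠ 0 :=
    pow_ne_zero _ (by exact_mod_cast hp.ne_zero)
  have hdvd3 : ((p : ℤ) ^ A) ∣ (m : ℤ) * (Ring.choose z k - Ring.choose y k) :=
    (mul_dvd_mul_iff_left hpc).mp hdvd2
  have hcop : IsCoprime ((p : ℤ) ^ A) (m : ℤ) := by
    apply IsCoprime.pow_left
    exact Nat.isCoprime_iff_coprime.mpr ((Nat.Prime.coprime_iff_not_dvd hp).mpr hpm)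
  have := (hcop.dvd_of_dvd_mul_left) hdvd3
  exact Int.modEq_iff_dvd.mpr this
end

section
/- Let M be a positive integer, χ: ℤ → ℤ a function of period M with mean value zero (Σ_{a=0}^{M-1} χ(a) = 0), and for each k ≥ 0 define the generalized Bernoulli number B_{k,χ} by the generating function Σ_{a=0}^{M-1} χ(a) · t·e^{at}/(e^{Mt}-1) = Σ_{k≥0} B_{k,χ} t^k/k!. Then for each prime p not dividing M and each k ≥ 0, B_{k,χ} is the p-adic limit as n → ∞ of (1/(M·p^n)) · Σ_{a=0}^{M·p^n - 1} χ(a)·a^k. -/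
open scoped Classical

open PowerSeries Finset

private lemma chi_per (M : ℕ) (χ : ℤ → ℤ) (hper : ∀ n : ℤ, χ (n + M) = χ n)
    (b j : ℕ) : χ ((b : ℤ) + M * j) = χ b := by
  induction j with
  | zero => simp
  | succ j ih =>
    have h : (b : ℤ) + (M : ℤ) * ((j + 1 : ℕ) : ℤ) = ((b : ℤ) + M * j) + M := by
      push_cast; ring
    rw [h, hper, ih]

private lemma rescale_pow (M : ℚ) (j : ℕ) :
    (PowerSeries.rescale M (PowerSeries.exp ℚ)) ^ j =
      PowerSeries.rescale (M * j) (PowerSeries.exp ℚ) := by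
  induction j with
  | zero => simp [PowerSeries.rescale_zero]
  | succ j ih =>
    rw [pow_succ, ih, PowerSeries.exp_mul_exp_eq_exp_add]
    push_cast; ring_nf

private lemma sum_decomp (M : ℕ) (χ : ℤ → ℤ) (hper : ∀ n : ℤ, χ (n + M) = χ n) (q : ℕ) :
    ∑ a ∈ Finset.range (M * q), (χ a : ℚ) •
        PowerSeries.rescale (a : ℚ) (PowerSeries.exp ℚ) =
      (∑ b ∈ Finset.range M, (χ b : ℚ) •
        PowerSeries.rescale (b : ℚ) (PowerSeries.exp ℚ)) *
      ∑ j ∈ Finset.range q, (PowerSeries.rescale (M : ℚ) (PowerSeries.exp ℚ)) ^ j := by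
  induction q with
  | zero => simp
  | succ q ih =>
    rw [Nat.mul_succ, Finset.sum_range_add, ih, Finset.sum_range_succ, mul_add]
    congr 1
    have key : ∀ x ∈ Finset.range M, (χ ((M * q + x : ℕ) : ℤ) : ℚ) •
        PowerSeries.rescale (((M * q + x : ℕ) : ℕ) : ℚ) (PowerSeries.exp ℚ) =
        ((χ x : ℚ) • PowerSeries.rescale (x : ℚ) (PowerSeries.exp ℚ)) *
          (PowerSeries.rescale (M : ℚ) (PowerSeries.exp ℚ)) ^ q := by
      intro x _
      have hχ : χ ((M * q + x : ℕ) : ℤ) = χ x := by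
        have h := chi_per M χ hper x q
        rw [← h]; congr 1; push_cast; ring
      have hres : PowerSeries.rescale (((M * q + x : ℕ) : ℕ) : ℚ) (PowerSeries.exp ℚ) =
          PowerSeries.rescale (x : ℚ) (PowerSeries.exp ℚ) *
            (PowerSeries.rescale (M : ℚ) (PowerSeries.exp ℚ)) ^ q := by
        rw [rescale_pow, PowerSeries.exp_mul_exp_eq_exp_add]
        congr 1; push_cast; ring
      rw [hχ, hres, smul_mul_assoc]
    rw [Finset.sum_congr rfl key, ← Finset.sum_mul]

/-- The key rational identity: the averaged power sum equals a finite Bernoulli-type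
expansion in powers of `N = M * q`. -/
private lemma key_identity (M : ℕ) (hM : 0 < M) (χ : ℤ → ℤ)
    (hper : ∀ n : ℤ, χ (n + M) = χ n) (B : ℕ → ℚ)
    (hB : (PowerSeries.rescale (M : ℚ) (PowerSeries.exp ℚ) - 1) *
        PowerSeries.mk (fun k => B k / (Nat.factorial k : ℚ)) =
      ∑ a ∈ Finset.range M, (χ a : ℚ) •
        (PowerSeries.X * PowerSeries.rescale (a : ℚ) (PowerSeries.exp ℚ)))
    (q : ℕ) (hq : 0 < q) (k : ℕ) :
    (1 : ℚ) / (M * q) * ∑ a ∈ Finset.range (M * q), (χ a : ℚ) * (a : ℚ) ^ k =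
      ∑ i ∈ Finset.range (k + 1),
        ((Nat.factorial k : ℚ) * B i /
          (Nat.factorial i * Nat.factorial (k + 1 - i))) * ((M * q : ℕ) : ℚ) ^ (k - i) := by
  set E : ℚ → ℚ⟦X⟧ := fun c => PowerSeries.rescale c (PowerSeries.exp ℚ) with hE
  set F : ℚ⟦X⟧ := PowerSeries.mk (fun k => B k / (Nat.factorial k : ℚ)) with hF
  set N : ℕ := M * q with hN
  have hNpos : 0 < N := Nat.mul_pos hM hq
  have hNQ : ((N : ℕ) : ℚ) ≠ 0 := by exact_mod_cast hNpos.ne'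
  -- power series identity
  have hser : PowerSeries.X * ∑ a ∈ Finset.range N, (χ a : ℚ) • E a =
      F * (E N - 1) := by
    have hB' : (E M - 1) * F =
        PowerSeries.X * ∑ a ∈ Finset.range M, (χ a : ℚ) • E a := by
      rw [hB, Finset.mul_sum]
      exact Finset.sum_congr rfl fun a _ => (mul_smul_comm _ _ _).symm
    have hgeo : (∑ j ∈ Finset.range q, (E (M : ℚ)) ^ j) * (E M - 1) = E N - 1 := by
      rw [geom_sum_mul, hE]
      simp only [rescale_pow]
      congr 1
      push_cast [hN]; ring_nf
    calc PowerSeries.X * ∑ a ∈ Finset.range N, (χ a : ℚ) • E a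
        = (PowerSeries.X * ∑ a ∈ Finset.range M, (χ a : ℚ) • E a) *
            ∑ j ∈ Finset.range q, (E (M : ℚ)) ^ j := by
          rw [hN, sum_decomp M χ hper q]; ring
      _ = (E M - 1) * F * ∑ j ∈ Finset.range q, (E (M : ℚ)) ^ j := by rw [hB']
      _ = F * ((∑ j ∈ Finset.range q, (E (M : ℚ)) ^ j) * (E M - 1)) := by ring
      _ = F * (E N - 1) := by rw [hgeo]
  -- extract coefficient k+1
  have hcoeff := congrArg (PowerSeries.coeff (k + 1)) hser
  rw [PowerSeries.coeff_succ_X_mul, map_sum] at hcoeff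
  have hL : ∀ a ∈ Finset.range N, (PowerSeries.coeff k) ((χ a : ℚ) • E a) =
      (χ a : ℚ) * ((a : ℚ) ^ k / (Nat.factorial k : ℚ)) := by
    intro a _
    rw [hE]
    simp only [map_smul, smul_eq_mul, PowerSeries.coeff_rescale, PowerSeries.coeff_exp,
      Algebra.algebraMap_self, RingHom.id_apply]
    ring
  rw [Finset.sum_congr rfl hL] at hcoeff
  have hR : (PowerSeries.coeff (k + 1)) (F * (E N - 1)) =
      ∑ i ∈ Finset.range (k + 1),
        B i / (Nat.factorial i : ℚ) *
          (((N : ℕ) : ℚ) ^ (k + 1 - i) / (Nat.factorial (k + 1 - i) : ℚ)) := by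
    rw [PowerSeries.coeff_mul, Finset.Nat.sum_antidiagonal_eq_sum_range_succ_mk,
      Finset.sum_range_succ]
    have h0 : (PowerSeries.coeff (k + 1 - (k + 1))) (E (N : ℚ) - 1) = 0 := by
      rw [Nat.sub_self, hE]
      simp [PowerSeries.coeff_zero_eq_constantCoeff, map_sub,
        PowerSeries.constantCoeff_exp]
    have h1 : (PowerSeries.coeff (k + 1)) F *
        (PowerSeries.coeff (k + 1 - (k + 1))) (E ↑N - 1) = 0 := by
      rw [h0, mul_zero]
    rw [h1, add_zero]
    refine Finset.sum_congr rfl fun i hi => ?_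
    rw [Finset.mem_range] at hi
    have hne : k + 1 - i ≠ 0 := by omega
    rw [hE, hF, map_sub, PowerSeries.coeff_mk]
    simp only [PowerSeries.coeff_rescale, PowerSeries.coeff_exp, PowerSeries.coeff_one, hne,
      if_false, Algebra.algebraMap_self, RingHom.id_apply, sub_zero]
    ring
  rw [hR] at hcoeff
  -- now hcoeff : ∑ χ a * (a^k / k!) = ∑ B i / i! * (N^(k+1-i)/(k+1-i)!)
  have hfac : (Nat.factorial k : ℚ) ≠ 0 := by exact_mod_cast (Nat.factorial_pos k).ne'
  have expand : (1 : ℚ) / (M * q) * ∑ a ∈ Finset.range N, (χ a : ℚ) * (a : ℚ) ^ k =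
      ((Nat.factorial k : ℚ) / N) *
        ∑ a ∈ Finset.range N, (χ a : ℚ) * ((a : ℚ) ^ k / (Nat.factorial k : ℚ)) := by
    rw [Finset.mul_sum, Finset.mul_sum]
    refine Finset.sum_congr rfl fun a _ => ?_
    have : ((M : ℚ) * q) = ((N : ℕ) : ℚ) := by push_cast [hN]; ring
    rw [this]
    field_simp
  rw [expand, hcoeff, Finset.mul_sum]
  refine Finset.sum_congr rfl fun i hi => ?_
  rw [Finset.mem_range] at hi
  have h2 : k + 1 - i = (k - i) + 1 := by omega
  have hfi : (Nat.factorial i : ℚ) ≠ 0 := by exact_mod_cast (Nat.factorial_pos i).ne'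
  have hfki : (Nat.factorial (k + 1 - i) : ℚ) ≠ 0 := by
    exact_mod_cast (Nat.factorial_pos _).ne'
  rw [h2] at hfki ⊢
  rw [pow_succ]
  field_simp

/-- Generalized Bernoulli numbers `B_{k,χ}` are `p`-adic limits of averaged power sums. -/
theorem bernoulli_chi_padic_limit (M : ℕ) (hM : 0 < M)
    (χ : ℤ → ℤ) (hper : ∀ n : ℤ, χ (n + M) = χ n)
    (hmean : ∑ a ∈ Finset.range M, χ a = 0)
    (B : ℕ → ℚ)
    (hB : (PowerSeries.rescale (M : ℚ) (PowerSeries.exp ℚ) - 1) *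
        PowerSeries.mk (fun k => B k / (Nat.factorial k : ℚ)) =
      ∑ a ∈ Finset.range M, (χ a : ℚ) •
        (PowerSeries.X * PowerSeries.rescale (a : ℚ) (PowerSeries.exp ℚ)))
    (p : ℕ) [Fact p.Prime] (hp : ¬ p ∣ M) (k : ℕ) :
    Filter.Tendsto
      (fun n : ℕ => ((((1 : ℚ) / (M * p ^ n)) *
        ∑ a ∈ Finset.range (M * p ^ n), (χ a : ℚ) * (a : ℚ) ^ k : ℚ) : ℚ_[p]))
      Filter.atTop (nhds ((B k : ℚ) : ℚ_[p])) := by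
  have hfac : (Nat.factorial k : ℚ) ≠ 0 := by exact_mod_cast (Nat.factorial_pos k).ne'
  have hfun : ∀ n : ℕ,
      ((((1 : ℚ) / (M * p ^ n)) *
        ∑ a ∈ Finset.range (M * p ^ n), (χ a : ℚ) * (a : ℚ) ^ k : ℚ) : ℚ_[p]) =
      ((B k : ℚ) : ℚ_[p]) + ∑ i ∈ Finset.range k,
        (((Nat.factorial k : ℚ) * B i /
            (Nat.factorial i * Nat.factorial (k + 1 - i)) : ℚ) : ℚ_[p]) *
          ((M : ℚ_[p]) ^ (k - i)) * (((p : ℚ_[p]) ^ (k - i)) ^ n) := by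
    intro n
    have hq : 0 < p ^ n := pow_pos (Nat.Prime.pos (Fact.out)) n
    have hkey := key_identity M hM χ hper B hB (p ^ n) hq k
    have hterm : (Nat.factorial k : ℚ) * B k /
        (Nat.factorial k * Nat.factorial (k + 1 - k)) * ((M * p ^ n : ℕ) : ℚ) ^ (k - k) =
        B k := by
      have h1 : k + 1 - k = 1 := by omega
      rw [h1, Nat.sub_self, pow_zero, mul_one, Nat.factorial_one, Nat.cast_one, mul_one]
      field_simp
    rw [show ((M : ℚ) * (p : ℚ) ^ n) = ((M : ℚ) * ((p ^ n : ℕ) : ℚ)) by push_cast; ring]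
    rw [hkey, Finset.sum_range_succ, hterm, add_comm]
    push_cast
    congr 1
    refine Finset.sum_congr rfl fun i hi => ?_
    rw [Finset.mem_range] at hi
    rw [mul_pow, mul_assoc, ← pow_mul, ← pow_mul, Nat.mul_comm (k - i) n, pow_mul]
  simp only [hfun]
  have hlim : Filter.Tendsto
      (fun n : ℕ => ∑ i ∈ Finset.range k,
        (((Nat.factorial k : ℚ) * B i /
            (Nat.factorial i * Nat.factorial (k + 1 - i)) : ℚ) : ℚ_[p]) *
          ((M : ℚ_[p]) ^ (k - i)) * (((p : ℚ_[p]) ^ (k - i)) ^ n))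
      Filter.atTop (nhds 0) := by
    have h0 : (0 : ℚ_[p]) = ∑ i ∈ Finset.range k, 0 := by simp
    rw [h0]
    refine tendsto_finset_sum _ fun i hi => ?_
    rw [Finset.mem_range] at hi
    have hnorm : ‖(p : ℚ_[p]) ^ (k - i)‖ < 1 := by
      rw [norm_pow]
      exact pow_lt_one₀ (norm_nonneg _) Padic.norm_p_lt_one (by omega)
    have ht := (tendsto_pow_atTop_nhds_zero_of_norm_lt_one hnorm).const_mul
      ((((Nat.factorial k : ℚ) * B i /
          (Nat.factorial i * Nat.factorial (k + 1 - i)) : ℚ) : ℚ_[p]) *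
        ((M : ℚ_[p]) ^ (k - i)))
    simpa [mul_assoc] using ht
  have hfin := Filter.Tendsto.const_add ((B k : ℚ) : ℚ_[p]) hlim
  simpa using hfin
end
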